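/- arXiv:2012.13793 — 2 statements merged into one kernel-verified Lean document; each statement's English description precedes it below -/
import Mathlib

section
/- Let {a_n}_{n∈ℤ} and {b_n}_{n∈ℤ} be real bounded sequences. Define ã_n = min(a_n, 1), b̃⁺_n = [b_n]_+ + (a_{n−1}−1)_+ + (a_n−1)_+ and b̃⁻_n = −[b_n]_− − (a_{n−1}−1)_+ − (a_n−1)_+. Then the corresponding Jacobi operators on ℓ²(ℤ) satisfy the operator inequalities W({ã_n},{b̃⁻_n}) ≤ W({a_n},{b_n}) ≤ W({ã_n},{b̃⁺_n}), i.e., ⟨u, W({ã_n},{b̃⁻_n}) u⟩ ≤ ⟨u, W({a_n},{b_n}) u⟩ ≤ ⟨u, W({ã_n},{b̃⁺_n}) u⟩ for all u ∈ ℓ²(ℤ). -/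
/-- `ℓ²(ℤ)`: the Hilbert space of square-summable complex sequences indexed by `ℤ`. -/
noncomputable abbrev L2Z := lp (fun _ : ℤ => ℂ) 2

private lemma re_conj_mul_self (z : ℂ) : ((starRingEnd ℂ) z * z).re = ‖z‖ ^ 2 := by
  rw [mul_comm, Complex.mul_conj]
  simp [Complex.normSq_eq_norm_sq, ← Complex.ofReal_pow]

private lemma abs_re_conj_mul (z v : ℂ) : |((starRingEnd ℂ) z * v).re| ≤ ‖z‖ * ‖v‖ := by
  calc |((starRingEnd ℂ) z * v).re| ≤ ‖(starRingEnd ℂ) z * v‖ :=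
        Complex.abs_re_le_norm _
    _ = ‖z‖ * ‖v‖ := by simp

private lemma re_ofReal_mul' (r : ℝ) (z v : ℂ) :
    ((starRingEnd ℂ) z * ((r : ℂ) * v)).re = r * ((starRingEnd ℂ) z * v).re := by
  rw [mul_left_comm, Complex.re_ofReal_mul]

set_option maxHeartbeats 1000000 in
private lemma key_nonneg (u : ℤ → ℂ) (hu : Summable fun n => ‖u n‖ ^ 2)
    (c d : ℤ → ℝ) (hc : ∀ n, 0 ≤ c n) (hd : ∀ n, 0 ≤ d n)
    (C : ℝ) (hcC : ∀ n, c n ≤ C) (hdC : ∀ n, d n ≤ C)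
    (ε : ℝ) (hε : |ε| ≤ 1)
    (w : ℤ → ℂ)
    (hw : ∀ n, w n = ((ε * c (n - 1) : ℝ) : ℂ) * u (n - 1)
      + ((d n + c (n - 1) + c n : ℝ) : ℂ) * u n + ((ε * c n : ℝ) : ℂ) * u (n + 1))
    (hsum : Summable fun n => (starRingEnd ℂ) (u n) * w n) :
    0 ≤ (∑' n, (starRingEnd ℂ) (u n) * w n).re := by
  have hC0 : 0 ≤ C := le_trans (hc 0) (hcC 0)
  set D : ℤ → ℝ := fun n => d n * ‖u n‖ ^ 2 with hD_def
  set F : ℤ → ℝ := fun n =>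
    c n * (‖u (n + 1)‖ ^ 2 + ε * ((starRingEnd ℂ) (u (n + 1)) * u n).re) with hF_def
  set G : ℤ → ℝ := fun n =>
    c n * (‖u n‖ ^ 2 + ε * ((starRingEnd ℂ) (u n) * u (n + 1)).re) with hG_def
  -- pointwise identity
  have hT : ∀ n, ((starRingEnd ℂ) (u n) * w n).re = D n + (F (n - 1) + G n) := by
    intro n
    rw [hw n]
    simp only [mul_add, Complex.add_re, re_ofReal_mul', re_conj_mul_self]
    have h1 : (n - 1) + 1 = n := by ring
    simp only [hD_def, hF_def, hG_def, h1]
    ring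
  -- summability of the pieces
  have hu1 : Summable fun n => ‖u (n + 1)‖ ^ 2 :=
    (Equiv.addRight (1 : ℤ)).summable_iff.2 hu
  have hD : Summable D := by
    refine Summable.of_nonneg_of_le (fun n => mul_nonneg (hd n) (sq_nonneg _))
      (fun n => mul_le_mul_of_nonneg_right (hdC n) (sq_nonneg _)) (hu.mul_left C)
  have hbound : ∀ (z v : ℂ), |‖z‖ ^ 2 + ε * ((starRingEnd ℂ) z * v).re| ≤
      3 / 2 * ‖z‖ ^ 2 + 1 / 2 * ‖v‖ ^ 2 := by
    intro z v
    have h1 := abs_re_conj_mul z v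
    have h2 : |ε * ((starRingEnd ℂ) z * v).re| ≤ ‖z‖ * ‖v‖ := by
      rw [abs_mul]
      calc |ε| * |((starRingEnd ℂ) z * v).re| ≤ 1 * (‖z‖ * ‖v‖) :=
            mul_le_mul hε h1 (abs_nonneg _) zero_le_one
        _ = ‖z‖ * ‖v‖ := one_mul _
    have h3 : ‖z‖ * ‖v‖ ≤ 1 / 2 * ‖z‖ ^ 2 + 1 / 2 * ‖v‖ ^ 2 := by
      nlinarith [sq_nonneg (‖z‖ - ‖v‖)]
    have h4 := abs_le.1 h2
    rw [abs_le]
    constructor <;> nlinarith [sq_nonneg ‖z‖, sq_nonneg ‖v‖]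
  have hGabs : ∀ n, |G n| ≤ C * (3 / 2 * ‖u n‖ ^ 2 + 1 / 2 * ‖u (n + 1)‖ ^ 2) := by
    intro n
    rw [hG_def, abs_mul, abs_of_nonneg (hc n)]
    have := hbound (u n) (u (n + 1))
    have habs : (0:ℝ) ≤ |‖u n‖ ^ 2 + ε * ((starRingEnd ℂ) (u n) * u (n + 1)).re| :=
      abs_nonneg _
    exact mul_le_mul (hcC n) this habs hC0
  have hFabs : ∀ n, |F n| ≤ C * (3 / 2 * ‖u (n + 1)‖ ^ 2 + 1 / 2 * ‖u n‖ ^ 2) := by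
    intro n
    rw [hF_def, abs_mul, abs_of_nonneg (hc n)]
    have := hbound (u (n + 1)) (u n)
    exact mul_le_mul (hcC n) this (abs_nonneg _) hC0
  have hmaj : Summable fun n => C * (3 / 2 * ‖u n‖ ^ 2 + 1 / 2 * ‖u (n + 1)‖ ^ 2) := by
    have := ((hu.mul_left (3 / 2)).add (hu1.mul_left (1 / 2))).mul_left C
    simpa using this
  have hmaj' : Summable fun n => C * (3 / 2 * ‖u (n + 1)‖ ^ 2 + 1 / 2 * ‖u n‖ ^ 2) := by
    have := ((hu1.mul_left (3 / 2)).add (hu.mul_left (1 / 2))).mul_left C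
    simpa using this
  have hG : Summable G := by
    refine Summable.of_abs (Summable.of_nonneg_of_le (fun n => abs_nonneg _) hGabs hmaj)
  have hF : Summable F := by
    refine Summable.of_abs (Summable.of_nonneg_of_le (fun n => abs_nonneg _) hFabs hmaj')
  have hF' : Summable fun n => F (n - 1) :=
    (Equiv.subRight (1 : ℤ)).summable_iff.2 hF
  -- rewrite the real part of the tsum
  have hre : (∑' n, (starRingEnd ℂ) (u n) * w n).re
      = ∑' n, ((starRingEnd ℂ) (u n) * w n).re :=
    Complex.reCLM.map_tsum hsum
  rw [hre]
  have hstep : (∑' n, ((starRingEnd ℂ) (u n) * w n).re)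
      = (∑' n, D n) + ((∑' n, F (n - 1)) + ∑' n, G n) := by
    rw [← Summable.tsum_add hF' hG, ← Summable.tsum_add hD (hF'.add hG)]
    exact tsum_congr hT
  rw [hstep]
  have h1 : (∑' n, F (n - 1)) = ∑' n, F n := (Equiv.subRight (1 : ℤ)).tsum_eq F
  rw [h1, ← Summable.tsum_add hF hG]
  have hFG : ∀ n, 0 ≤ F n + G n := by
    intro n
    have h2 : |ε * (((starRingEnd ℂ) (u (n + 1)) * u n).re
        + ((starRingEnd ℂ) (u n) * u (n + 1)).re)| ≤ ‖u n‖ ^ 2 + ‖u (n + 1)‖ ^ 2 := by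
      have ha := abs_re_conj_mul (u (n + 1)) (u n)
      have hb := abs_re_conj_mul (u n) (u (n + 1))
      rw [abs_mul]
      have : |((starRingEnd ℂ) (u (n + 1)) * u n).re
          + ((starRingEnd ℂ) (u n) * u (n + 1)).re| ≤ 2 * (‖u n‖ * ‖u (n + 1)‖) := by
        calc _ ≤ |((starRingEnd ℂ) (u (n + 1)) * u n).re|
              + |((starRingEnd ℂ) (u n) * u (n + 1)).re| := abs_add_le _ _
          _ ≤ 2 * (‖u n‖ * ‖u (n + 1)‖) := by nlinarith [norm_nonneg (u n)]
      calc |ε| * |_| ≤ 1 * (2 * (‖u n‖ * ‖u (n + 1)‖)) :=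
            mul_le_mul hε this (abs_nonneg _) zero_le_one
        _ ≤ ‖u n‖ ^ 2 + ‖u (n + 1)‖ ^ 2 := by nlinarith [sq_nonneg (‖u n‖ - ‖u (n + 1)‖)]
    have h3 := (abs_le.1 h2).1
    have : F n + G n = c n * (‖u (n + 1)‖ ^ 2 + ‖u n‖ ^ 2
        + ε * (((starRingEnd ℂ) (u (n + 1)) * u n).re
          + ((starRingEnd ℂ) (u n) * u (n + 1)).re)) := by
      rw [hF_def, hG_def]; ring
    rw [this]
    exact mul_nonneg (hc n) (by linarith)
  have hDpos : 0 ≤ ∑' n, D n :=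
    tsum_nonneg fun n => mul_nonneg (hd n) (sq_nonneg _)
  have hFGpos : 0 ≤ ∑' n, (F n + G n) := tsum_nonneg hFG
  linarith

private lemma min_eq_sub (x : ℝ) : min x 1 = x - max (x - 1) 0 := by
  rcases le_total x 1 with h | h
  · rw [min_eq_left h, max_eq_right (by linarith)]; ring
  · rw [min_eq_right h, max_eq_left (by linarith)]; ring

private lemma max_eq_add (x : ℝ) : max x 0 = x + max (-x) 0 := by
  rcases le_total x 0 with h | h
  · rw [max_eq_right h, max_eq_left (by linarith)]; ring
  · rw [max_eq_left h, max_eq_right (by linarith)]; ring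


/-- **Operator bracketing for Jacobi operators.** Let `{a_n}`, `{b_n}` be real bounded
sequences, `ã_n = min(a_n, 1)`, `b̃⁺_n = [b_n]_+ + (a_{n-1}-1)_+ + (a_n-1)_+` and
`b̃⁻_n = -[b_n]_- - (a_{n-1}-1)_+ - (a_n-1)_+`. Then the Jacobi operators satisfy
`W({ã_n},{b̃⁻_n}) ≤ W({a_n},{b_n}) ≤ W({ã_n},{b̃⁺_n})` in the sense of quadratic forms. -/
theorem jacobi_bracketing
    (a b : ℤ → ℝ)
    (ha_bdd : ∃ C : ℝ, ∀ n, |a n| ≤ C) (hb_bdd : ∃ C : ℝ, ∀ n, |b n| ≤ C)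
    (J Jplus Jminus : L2Z →L[ℂ] L2Z)
    (hJ : ∀ (u : L2Z) (n : ℤ),
      (J u) n = (a (n - 1) : ℂ) * u (n - 1) + (b n : ℂ) * u n + (a n : ℂ) * u (n + 1))
    (hJplus : ∀ (u : L2Z) (n : ℤ),
      (Jplus u) n = ((min (a (n - 1)) 1 : ℝ) : ℂ) * u (n - 1)
        + ((max (b n) 0 + max (a (n - 1) - 1) 0 + max (a n - 1) 0 : ℝ) : ℂ) * u n
        + ((min (a n) 1 : ℝ) : ℂ) * u (n + 1))
    (hJminus : ∀ (u : L2Z) (n : ℤ),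
      (Jminus u) n = ((min (a (n - 1)) 1 : ℝ) : ℂ) * u (n - 1)
        + ((-(max (-b n) 0) - max (a (n - 1) - 1) 0 - max (a n - 1) 0 : ℝ) : ℂ) * u n
        + ((min (a n) 1 : ℝ) : ℂ) * u (n + 1)) :
    ∀ u : L2Z,
      (inner ℂ u (Jminus u) : ℂ).re ≤ (inner ℂ u (J u) : ℂ).re ∧
      (inner ℂ u (J u) : ℂ).re ≤ (inner ℂ u (Jplus u) : ℂ).re := by
  obtain ⟨Ca, hCa⟩ := ha_bdd
  obtain ⟨Cb, hCb⟩ := hb_bdd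
  set C : ℝ := |Ca| + |Cb| + 1 with hC_def
  have hCa' : ∀ n, |a n| ≤ C := fun n => le_trans (hCa n) (by
    have := abs_nonneg Cb; have := le_abs_self Ca; simp only [hC_def]; linarith)
  have hCb' : ∀ n, |b n| ≤ C := fun n => le_trans (hCb n) (by
    have := abs_nonneg Ca; have := le_abs_self Cb; simp only [hC_def]; linarith)
  have hc : ∀ n, (0:ℝ) ≤ max (a n - 1) 0 := fun n => le_max_right _ _
  have hC0 : (0:ℝ) ≤ C := by positivity
  have hcC : ∀ n, max (a n - 1) 0 ≤ C := fun n => by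
    have := (abs_le.1 (hCa' n)).2; exact max_le (by linarith) hC0
  intro u
  have hu2 : Summable fun n => ‖u n‖ ^ 2 := by
    have hmem := lp.memℓp u
    rw [memℓp_gen_iff (by norm_num)] at hmem
    refine hmem.congr fun i => ?_
    rw [show ((2 : ENNReal).toReal) = ((2:ℕ):ℝ) by norm_num, Real.rpow_natCast]
  constructor
  · -- Jminus ≤ J
    have hdC : ∀ n, max (b n) 0 ≤ C := fun n => by
      have := (abs_le.1 (hCb' n)).2; exact max_le (by linarith) hC0
    have hsum : Summable fun n => (starRingEnd ℂ) (u n) * (J u - Jminus u) n := by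
      have := lp.summable_inner (𝕜 := ℂ) u (J u - Jminus u)
      simpa [RCLike.inner_apply, mul_comm] using this
    have hw : ∀ n : ℤ, (J u - Jminus u) n
        = ((1 * max (a (n - 1) - 1) 0 : ℝ) : ℂ) * u (n - 1)
          + ((max (b n) 0 + max (a (n - 1) - 1) 0 + max (a n - 1) 0 : ℝ) : ℂ) * u n
          + ((1 * max (a n - 1) 0 : ℝ) : ℂ) * u (n + 1) := by
      intro n
      rw [lp.coeFn_sub, Pi.sub_apply, hJ, hJminus, min_eq_sub (a (n - 1)),
        min_eq_sub (a n), max_eq_add (b n)]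
      push_cast
      ring
    have hkey := key_nonneg u hu2 (fun n => max (a n - 1) 0) (fun n => max (b n) 0)
      hc (fun n => le_max_right _ _) C hcC hdC 1 (by norm_num)
      (fun n => (J u - Jminus u) n) hw hsum
    have heq : (inner ℂ u (J u) : ℂ).re - (inner ℂ u (Jminus u) : ℂ).re
        = (∑' n, (starRingEnd ℂ) (u n) * (J u - Jminus u) n).re := by
      rw [← Complex.sub_re, ← inner_sub_right, lp.inner_eq_tsum]
      simp [RCLike.inner_apply, mul_comm]
    linarith [heq ▸ hkey]
  · -- J ≤ Jplus
    have hdC : ∀ n, max (-b n) 0 ≤ C := fun n => by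
      have := (abs_le.1 (hCb' n)).1; exact max_le (by linarith) hC0
    have hsum : Summable fun n => (starRingEnd ℂ) (u n) * (Jplus u - J u) n := by
      have := lp.summable_inner (𝕜 := ℂ) u (Jplus u - J u)
      simpa [RCLike.inner_apply, mul_comm] using this
    have hw : ∀ n : ℤ, (Jplus u - J u) n
        = (((-1) * max (a (n - 1) - 1) 0 : ℝ) : ℂ) * u (n - 1)
          + ((max (-b n) 0 + max (a (n - 1) - 1) 0 + max (a n - 1) 0 : ℝ) : ℂ) * u n
          + (((-1) * max (a n - 1) 0 : ℝ) : ℂ) * u (n + 1) := by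
      intro n
      rw [lp.coeFn_sub, Pi.sub_apply, hJplus, hJ, min_eq_sub (a (n - 1)),
        min_eq_sub (a n), max_eq_add (b n)]
      push_cast
      ring
    have hkey := key_nonneg u hu2 (fun n => max (a n - 1) 0) (fun n => max (-b n) 0)
      hc (fun n => le_max_right _ _) C hcC hdC (-1) (by norm_num)
      (fun n => (Jplus u - J u) n) hw hsum
    have heq : (inner ℂ u (Jplus u) : ℂ).re - (inner ℂ u (J u) : ℂ).re
        = (∑' n, (starRingEnd ℂ) (u n) * (Jplus u - J u) n).re := by
      rw [← Complex.sub_re, ← inner_sub_right, lp.inner_eq_tsum]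
      simp [RCLike.inner_apply, mul_comm]
    linarith [heq ▸ hkey]
end

section
/- Let H be a Hilbert space, β a real number, and X₁, X₂ bounded self-adjoint operators on H such that β·I − X₁ and β·I − X₂ are both positive and invertible. Then for every λ ∈ [0,1], the operator β·I − (λX₁ + (1−λ)X₂) is positive and invertible and (β·I − λX₁ − (1−λ)X₂)^{−1} ≤ λ(β·I − X₁)^{−1} + (1−λ)(β·I − X₂)^{−1} in the Loewner order. -/
open ContinuousLinearMap in
lemma aux_isUnit {H : Type*} [NormedAddCommGroup H] [InnerProductSpace ℂ H] [CompleteSpace H]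
    (T : H →L[ℂ] H) {c : ℝ} (hc : 0 < c)
    (h : ∀ u : H, c * ‖u‖ ^ 2 ≤ (inner ℂ u (T u) : ℂ).re) : IsUnit T := by
  refine isUnit_of_forall_le_norm_inner_map T (c := ⟨c, hc.le⟩) (by exact_mod_cast hc) fun x => ?_
  calc ‖x‖ ^ 2 * (⟨c, hc.le⟩ : NNReal) = c * ‖x‖ ^ 2 := by push_cast; ring
    _ ≤ (inner ℂ x (T x) : ℂ).re := h x
    _ = (inner ℂ (T x) x : ℂ).re := by rw [← inner_conj_symm (T x) x, Complex.conj_re]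
    _ ≤ ‖(inner ℂ (T x) x : ℂ)‖ := Complex.re_le_norm _

lemma aux_key {H : Type*} [NormedAddCommGroup H] [InnerProductSpace ℂ H] [CompleteSpace H]
    (T : H →L[ℂ] H) (hT : IsSelfAdjoint T)
    (hpos : ∀ w : H, 0 ≤ (inner ℂ w (T w) : ℂ).re) (hU : IsUnit T) (u v : H) :
    2 * (inner ℂ u v : ℂ).re ≤ (inner ℂ v (T v) : ℂ).re + (inner ℂ u (Ring.inverse T u) : ℂ).re := by
  set S := Ring.inverse T with hS
  have hTS : T (S u) = u := by
    have h := Ring.mul_inverse_cancel T hU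
    calc T (S u) = (T * S) u := rfl
      _ = u := by rw [h]; rfl
  have hsym : ∀ x y : H, (inner ℂ (T x) y : ℂ) = inner ℂ x (T y) := fun x y => by
    conv_lhs => rw [← hT.adjoint_eq]
    exact ContinuousLinearMap.adjoint_inner_left T y x
  have h0 := hpos (S u - v)
  have hexp : (inner ℂ (S u - v) (T (S u - v)) : ℂ)
      = inner ℂ (S u) u - inner ℂ u v - inner ℂ v u + inner ℂ v (T v) := by
    rw [map_sub, hTS, inner_sub_right, inner_sub_left, inner_sub_left, ← hsym (S u) v, hTS]
    ring
  rw [hexp] at h0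
  simp only [Complex.add_re, Complex.sub_re] at h0
  have e1 : (inner ℂ (S u) u : ℂ).re = (inner ℂ u (S u) : ℂ).re := by
    rw [← inner_conj_symm u (S u), Complex.conj_re]
  have e2 : (inner ℂ v u : ℂ).re = (inner ℂ u v : ℂ).re := by
    rw [← inner_conj_symm u v, Complex.conj_re]
  linarith

/-- **Operator convexity of the resolvent (Lemma 3).** Let `β ∈ ℝ` and let `X₁, X₂` be
bounded self-adjoint operators on a Hilbert space `H` with `βI - X₁ > 0` and `βI - X₂ > 0`
(positive and invertible, i.e. `≥ cI` for some `c > 0`). Then for `λ ∈ [0,1]` the operator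
`βI - (λX₁ + (1-λ)X₂)` is positive and invertible, and
`(βI - λX₁ - (1-λ)X₂)⁻¹ ≤ λ(βI - X₁)⁻¹ + (1-λ)(βI - X₂)⁻¹` in the Loewner order. -/
theorem resolvent_operator_convex
    {H : Type*} [NormedAddCommGroup H] [InnerProductSpace ℂ H] [CompleteSpace H]
    (β : ℝ) (X₁ X₂ : H →L[ℂ] H)
    (hX₁ : IsSelfAdjoint X₁) (hX₂ : IsSelfAdjoint X₂)
    (h₁ : ∃ c : ℝ, 0 < c ∧ ∀ u : H,
      c * ‖u‖ ^ 2 ≤ (inner ℂ u (((β : ℂ) • (1 : H →L[ℂ] H) - X₁) u) : ℂ).re)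
    (h₂ : ∃ c : ℝ, 0 < c ∧ ∀ u : H,
      c * ‖u‖ ^ 2 ≤ (inner ℂ u (((β : ℂ) • (1 : H →L[ℂ] H) - X₂) u) : ℂ).re)
    (l : ℝ) (hl : l ∈ Set.Icc (0:ℝ) 1) :
    (∃ c : ℝ, 0 < c ∧ ∀ u : H, c * ‖u‖ ^ 2 ≤
      (inner ℂ u (((β : ℂ) • (1 : H →L[ℂ] H) - ((l : ℂ) • X₁ + ((1 - l : ℝ) : ℂ) • X₂)) u) : ℂ).re) ∧
    IsUnit ((β : ℂ) • (1 : H →L[ℂ] H) - ((l : ℂ) • X₁ + ((1 - l : ℝ) : ℂ) • X₂)) ∧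
    ∀ u : H,
      (inner ℂ u ((Ring.inverse ((β : ℂ) • (1 : H →L[ℂ] H) - ((l : ℂ) • X₁ + ((1 - l : ℝ) : ℂ) • X₂))) u) : ℂ).re
        ≤ (inner ℂ u (((l : ℂ) • Ring.inverse ((β : ℂ) • (1 : H →L[ℂ] H) - X₁)
            + ((1 - l : ℝ) : ℂ) • Ring.inverse ((β : ℂ) • (1 : H →L[ℂ] H) - X₂)) u) : ℂ).re := by
  obtain ⟨hl0, hl1⟩ := hl
  obtain ⟨c₁, hc₁, hA⟩ := h₁
  obtain ⟨c₂, hc₂, hB⟩ := h₂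
  set A : H →L[ℂ] H := (β : ℂ) • (1 : H →L[ℂ] H) - X₁ with hAdef
  set B : H →L[ℂ] H := (β : ℂ) • (1 : H →L[ℂ] H) - X₂ with hBdef
  set C : H →L[ℂ] H := (β : ℂ) • (1 : H →L[ℂ] H) - ((l : ℂ) • X₁ + ((1 - l : ℝ) : ℂ) • X₂)
    with hCdef
  have hcast : ((1 - l : ℝ) : ℂ) = 1 - (l : ℂ) := by push_cast; ring
  have hCeq : C = (l : ℂ) • A + ((1 - l : ℝ) : ℂ) • B := by
    rw [hCdef, hAdef, hBdef, hcast]; module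
  -- selfadjointness
  have hsm : IsSelfAdjoint ((β : ℂ) • (1 : H →L[ℂ] H)) := by
    simp [IsSelfAdjoint, star_smul, Complex.star_def, Complex.conj_ofReal]
  have hAsa : IsSelfAdjoint A := hsm.sub hX₁
  have hBsa : IsSelfAdjoint B := hsm.sub hX₂
  -- positivity
  have hApos : ∀ w : H, 0 ≤ (inner ℂ w (A w) : ℂ).re := fun w =>
    le_trans (by positivity) (hA w)
  have hBpos : ∀ w : H, 0 ≤ (inner ℂ w (B w) : ℂ).re := fun w =>
    le_trans (by positivity) (hB w)
  -- coercivity of C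
  have hCinner : ∀ w : H, (inner ℂ w (C w) : ℂ).re
      = l * (inner ℂ w (A w) : ℂ).re + (1 - l) * (inner ℂ w (B w) : ℂ).re := by
    intro w
    rw [hCeq]
    simp only [ContinuousLinearMap.add_apply, ContinuousLinearMap.coe_smul',
      Pi.smul_apply, inner_add_right, inner_smul_right, Complex.add_re,
      Complex.re_ofReal_mul]
  have hCcoer : ∀ u : H, min c₁ c₂ * ‖u‖ ^ 2 ≤ (inner ℂ u (C u) : ℂ).re := by
    intro u
    rw [hCinner u]
    have h1 := hA u
    have h2 := hB u
    have hm1 : min c₁ c₂ ≤ c₁ := min_le_left _ _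
    have hm2 : min c₁ c₂ ≤ c₂ := min_le_right _ _
    have hn : (0:ℝ) ≤ ‖u‖ ^ 2 := by positivity
    have hl1' : (0:ℝ) ≤ 1 - l := by linarith
    calc min c₁ c₂ * ‖u‖ ^ 2
        = l * (min c₁ c₂ * ‖u‖ ^ 2) + (1 - l) * (min c₁ c₂ * ‖u‖ ^ 2) := by ring
      _ ≤ l * (c₁ * ‖u‖ ^ 2) + (1 - l) * (c₂ * ‖u‖ ^ 2) :=
          add_le_add
            (mul_le_mul_of_nonneg_left (mul_le_mul_of_nonneg_right hm1 hn) hl0)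
            (mul_le_mul_of_nonneg_left (mul_le_mul_of_nonneg_right hm2 hn) hl1')
      _ ≤ l * (inner ℂ u (A u) : ℂ).re + (1 - l) * (inner ℂ u (B u) : ℂ).re :=
          add_le_add (mul_le_mul_of_nonneg_left h1 hl0)
            (mul_le_mul_of_nonneg_left h2 hl1')
  have hcmin : 0 < min c₁ c₂ := lt_min hc₁ hc₂
  have hAU : IsUnit A := aux_isUnit A hc₁ hA
  have hBU : IsUnit B := aux_isUnit B hc₂ hB
  have hCU : IsUnit C := aux_isUnit C hcmin hCcoer
  refine ⟨⟨min c₁ c₂, hcmin, hCcoer⟩, hCU, fun u => ?_⟩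
  set v : H := Ring.inverse C u with hv
  have hCv : C v = u := by
    have h := Ring.mul_inverse_cancel C hCU
    calc C v = (C * Ring.inverse C) u := rfl
      _ = u := by rw [h]; rfl
  have keyA := aux_key A hAsa hApos hAU u v
  have keyB := aux_key B hBsa hBpos hBU u v
  have hvC : (inner ℂ v (C v) : ℂ).re
      = l * (inner ℂ v (A v) : ℂ).re + (1 - l) * (inner ℂ v (B v) : ℂ).re := hCinner v
  have hvu : (inner ℂ v (C v) : ℂ).re = (inner ℂ u v : ℂ).re := by
    rw [hCv, ← inner_conj_symm u v, Complex.conj_re]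
  have hRHS : (inner ℂ u (((l : ℂ) • Ring.inverse A + ((1 - l : ℝ) : ℂ) • Ring.inverse B) u) : ℂ).re
      = l * (inner ℂ u (Ring.inverse A u) : ℂ).re
        + (1 - l) * (inner ℂ u (Ring.inverse B u) : ℂ).re := by
    simp only [ContinuousLinearMap.add_apply, ContinuousLinearMap.coe_smul',
      Pi.smul_apply, inner_add_right, inner_smul_right, Complex.add_re,
      Complex.re_ofReal_mul, hcast]
    simp [Complex.sub_re, Complex.one_re, Complex.sub_im, Complex.ofReal_re,
      Complex.ofReal_im, sub_mul, one_mul]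
  rw [hRHS]
  show (inner ℂ u v : ℂ).re ≤ _
  nlinarith [mul_le_mul_of_nonneg_left keyA hl0,
    mul_le_mul_of_nonneg_left keyB (by linarith : (0:ℝ) ≤ 1 - l)]
end
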